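/- Let κ be a regular uncountable cardinal and let X = K_{2^κ, κ} be the complete bipartite graph with parts B of size 2^κ and A of size κ. Then the stationary list colorability SList(X, κ) holds: for every list function L assigning to each vertex a stationary subset of κ, there exists a good choice function c of L. -/

import Mathlib

open Cardinal Set

/-- C is a club (closed unbounded) subset of the ordinal o. -/
def IsClubIn (C : Set Ordinal) (o : Ordinal) : Prop :=
  C ⊆ Set.Iio o ∧ (∀ a < o, ∃ b ∈ C, a ≤ b ∧ b < o) ∧
  ∀ a < o, 0 < a → (∀ b < a, ∃ x ∈ C, b < x ∧ x < a) → a ∈ C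

/-- S is a stationary subset of the ordinal o. -/
def IsStationaryIn (S : Set Ordinal) (o : Ordinal) : Prop :=
  S ⊆ Set.Iio o ∧ ∀ C, IsClubIn C o → (S ∩ C).Nonempty

section Aux

/-- Interval clubs: (a, o) is a club in a limit ordinal o. -/
private lemma ioo_club {a o : Ordinal} (ho : Order.IsSuccLimit o) (ha : a < o) :
    IsClubIn (Set.Ioo a o) o := by
  refine ⟨fun x hx => hx.2, fun b hb => ?_, fun x hx hx0 hlim => ?_⟩
  · refine ⟨max (a + 1) b, ⟨?_, ?_⟩, le_max_right _ _, ?_⟩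
    · exact lt_of_lt_of_le (Order.lt_succ a) (le_max_left _ _)
    · exact max_lt (ho.succ_lt ha) hb
    · exact max_lt (ho.succ_lt ha) hb
  · obtain ⟨y, hy, -, hyx⟩ := hlim 0 hx0
    exact ⟨hy.1.trans hyx, hx⟩

/-- Stationary sets are unbounded. -/
private lemma stat_unbounded {S : Set Ordinal} {κ : Cardinal} (hκ : ℵ₀ ≤ κ)
    (hS : IsStationaryIn S κ.ord) : ∀ a < κ.ord, ∃ x ∈ S, a < x ∧ x < κ.ord := by
  intro a ha
  obtain ⟨x, hxS, hxC⟩ := hS.2 _ (ioo_club (Cardinal.isSuccLimit_ord hκ) ha)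
  exact ⟨x, hxS, hxC.1, hxC.2⟩

/-- The recursively defined sequence of chosen values. -/
private noncomputable def seqF (T : Ordinal.{0} → Set Ordinal.{0}) : Ordinal → Ordinal :=
  Ordinal.lt_wf.fix fun i IH => sInf (T i ∩ Set.Ioi (Ordinal.bsup i IH))

private lemma seqF_eq (T : Ordinal.{0} → Set Ordinal.{0}) (i : Ordinal) :
    seqF T i = sInf (T i ∩ Set.Ioi (Ordinal.bsup i (fun j _ => seqF T j))) := by
  exact Ordinal.lt_wf.fix_eq _ i

private lemma seqF_spec {κ : Cardinal.{0}} (hreg : κ.IsRegular) (T : Ordinal.{0} → Set Ordinal.{0})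
    (hT : ∀ i < κ.ord, ∀ a < κ.ord, ∃ x ∈ T i, a < x ∧ x < κ.ord) :
    ∀ i < κ.ord, seqF T i ∈ T i ∧ seqF T i < κ.ord ∧
      Ordinal.bsup i (fun j _ => seqF T j) < seqF T i := by
  intro i
  induction i using Ordinal.induction with
  | h i IH =>
    intro hi
    set s := Ordinal.bsup i (fun j _ => seqF T j) with hs
    have hslt : s < κ.ord := by
      apply Cardinal.bsup_lt_ord_of_isRegular hreg (Cardinal.lt_ord.1 hi)
      intro j hj
      exact ((IH j hj) (hj.trans hi)).2.1
    obtain ⟨x, hxT, hxs, hxκ⟩ := hT i hi s hslt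
    have hne : (T i ∩ Set.Ioi s).Nonempty := ⟨x, hxT, hxs⟩
    have hmem : seqF T i ∈ T i ∩ Set.Ioi s := by
      rw [seqF_eq]; exact csInf_mem hne
    refine ⟨hmem.1, ?_, hmem.2⟩
    have : seqF T i ≤ x := by rw [seqF_eq]; exact csInf_le (OrderBot.bddBelow _) ⟨hxT, hxs⟩
    exact this.trans_lt hxκ

private lemma seqF_strictMono {κ : Cardinal.{0}} (hreg : κ.IsRegular) (T : Ordinal.{0} → Set Ordinal.{0})
    (hT : ∀ i < κ.ord, ∀ a < κ.ord, ∃ x ∈ T i, a < x ∧ x < κ.ord)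
    {j i : Ordinal} (hj : j < i) (hi : i < κ.ord) : seqF T j < seqF T i :=
  (Ordinal.le_bsup (fun j _ => seqF T j) j hj).trans_lt (seqF_spec hreg T hT i hi).2.2

private lemma seqF_ge {κ : Cardinal.{0}} (hreg : κ.IsRegular) (T : Ordinal.{0} → Set Ordinal.{0})
    (hT : ∀ i < κ.ord, ∀ a < κ.ord, ∃ x ∈ T i, a < x ∧ x < κ.ord) :
    ∀ i < κ.ord, i ≤ seqF T i := by
  intro i
  induction i using Ordinal.induction with
  | h i IH =>
    intro hi
    apply le_of_forall_lt
    intro k hk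
    exact (IH k hk (hk.trans hi)).trans_lt (seqF_strictMono hreg T hT hk hi)

end Aux

/-- SList(K_{2^κ,κ}, κ) holds. -/
theorem slist_holds_complete_bipartite {A B : Type} (κ : Cardinal)
    (hreg : κ.IsRegular) (hunc : ℵ₀ < κ)
    (hA : #A = κ) (hB : #B = 2 ^ κ)
    (L : A ⊕ B → Set Ordinal) (hL : ∀ v, IsStationaryIn (L v) κ.ord) :
    ∃ c : A ⊕ B → Ordinal, (∀ v, c v ∈ L v) ∧
      ∀ v w, (completeBipartiteGraph A B).Adj v w → c v ≠ c w := by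
  have hκω : ℵ₀ ≤ κ := hunc.le
  have hlim : Order.IsSuccLimit κ.ord := Cardinal.isSuccLimit_ord hκω
  -- an injection from A into ordinals < κ.ord
  obtain ⟨e⟩ : Nonempty (A ≃ κ.ord.ToType) := by
    rw [← Cardinal.eq, hA, Cardinal.mk_ord_toType]
  let idx : A → Ordinal.{0} := fun a => ((Ordinal.ToType.mk (o := κ.ord)).symm (e a)).1
  have idx_lt : ∀ a, idx a < κ.ord := fun a => ((Ordinal.ToType.mk (o := κ.ord)).symm (e a)).2
  have idx_inj : Function.Injective idx := fun a b h =>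
    e.injective ((Ordinal.ToType.mk (o := κ.ord)).symm.injective (Subtype.ext h))
  classical
  -- lists indexed by ordinals
  let T : Ordinal → Set Ordinal := fun i =>
    if h : ∃ a : A, idx a = i then L (Sum.inl h.choose) else Set.Iio κ.ord
  have hT : ∀ i < κ.ord, ∀ a < κ.ord, ∃ x ∈ T i, a < x ∧ x < κ.ord := by
    intro i hi a ha
    by_cases h : ∃ a : A, idx a = i
    · simp only [T, dif_pos h]
      exact stat_unbounded hκω (hL _) a ha
    · simp only [T, dif_neg h]
      exact ⟨a + 1, hlim.succ_lt ha, Order.lt_succ a, hlim.succ_lt ha⟩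
  set F : Ordinal → Ordinal := seqF T with hF
  have spec := seqF_spec hreg T hT
  have smono := fun {j i : Ordinal} (hj : j < i) (hi : i < κ.ord) =>
    seqF_strictMono hreg T hT hj hi
  have sge := seqF_ge hreg T hT
  -- the club of limit points of the range of F
  set C : Set Ordinal :=
    {b | b < κ.ord ∧ ∀ a < b, ∃ j < κ.ord, a < F j ∧ F j < b} with hC
  have hclub : IsClubIn C κ.ord := by
    refine ⟨fun b hb => hb.1, ?_, ?_⟩
    · -- unbounded
      intro a ha
      have hi : a + Ordinal.omega0 < κ.ord := by
        rw [Cardinal.lt_ord, Ordinal.card_add, Ordinal.card_omega0]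
        exact Cardinal.add_lt_of_lt hκω (Cardinal.lt_ord.1 ha) hunc
      have hilim : Order.IsSuccLimit (a + Ordinal.omega0) := Ordinal.isSuccLimit_add a Ordinal.isSuccLimit_omega0
      set b := Ordinal.bsup (a + Ordinal.omega0) (fun j _ => F j) with hb
      have hbκ : b < κ.ord := by
        apply Cardinal.bsup_lt_ord_of_isRegular hreg (Cardinal.lt_ord.1 hi)
        intro j hj
        exact (spec j (hj.trans hi)).2.1
      have key : ∀ j < a + Ordinal.omega0, F j < b := by
        intro j hj
        have hj1 : j + 1 < a + Ordinal.omega0 := hilim.succ_lt hj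
        exact lt_of_lt_of_le (smono (Order.lt_succ j) (hj1.trans hi))
          (Ordinal.le_bsup _ _ hj1)
      refine ⟨b, ⟨hbκ, ?_⟩, ?_, hbκ⟩
      · intro x hx
        obtain ⟨j, hj, hxj⟩ := (Ordinal.lt_bsup _).1 hx
        exact ⟨j, hj.trans hi, hxj, key j hj⟩
      · have haa : a < a + Ordinal.omega0 := by
          nth_rewrite 1 [← add_zero a]
          exact (add_lt_add_iff_left a).2 Ordinal.omega0_pos
        exact le_of_lt (lt_of_le_of_lt (sge a (haa.trans hi)) (key a haa))
    · -- closed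
      intro x hx hx0 hlp
      refine ⟨hx, fun a ha => ?_⟩
      obtain ⟨y, hyC, hay, hyx⟩ := hlp a ha
      obtain ⟨j, hj, haj, hjy⟩ := hyC.2 a hay
      exact ⟨j, hj, haj, hjy.trans hyx⟩
  -- values of F are never in C
  have hdisj : ∀ i < κ.ord, F i ∉ C := by
    intro i hi hmem
    have hle : F i ≤ Ordinal.bsup i (fun j _ => F j) := by
      apply le_of_forall_lt
      intro a ha
      obtain ⟨j, hjκ, haj, hji⟩ := hmem.2 a ha
      have hji' : j < i := by
        by_contra h
        push_neg at h
        rcases h.lt_or_eq with h | h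
        · exact absurd (smono h hjκ) (lt_asymm hji)
        · exact absurd hji (by rw [h]; exact lt_irrefl _)
      exact haj.trans_le (Ordinal.le_bsup _ j hji')
    exact absurd (spec i hi).2.2 (not_lt.2 hle)
  -- define the choice function
  have hBchoice : ∀ b : B, ∃ x, x ∈ L (Sum.inr b) ∩ C := fun b => (hL (Sum.inr b)).2 C hclub
  choose cB hcB using hBchoice
  refine ⟨Sum.elim (fun a => F (idx a)) cB, ?_, ?_⟩
  · rintro (a | b)
    · have h : ∃ a' : A, idx a' = idx a := ⟨a, rfl⟩
      have hmem := (spec (idx a) (idx_lt a)).1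
      have : T (idx a) = L (Sum.inl a) := by
        simp only [T, dif_pos h]
        exact congrArg (fun x => L (Sum.inl x)) (idx_inj h.choose_spec)
      rwa [this] at hmem
    · exact (hcB b).1
  · rintro (a | b) (a' | b') hadj <;>
      simp only [completeBipartiteGraph, SimpleGraph.fromRel_adj, Sum.isLeft, Sum.isRight] at hadj
    · simp at hadj
    · intro h
      simp only [Sum.elim_inl, Sum.elim_inr] at h
      exact hdisj (idx a) (idx_lt a) (h ▸ (hcB b').2)
    · intro h
      simp only [Sum.elim_inl, Sum.elim_inr] at h
      exact hdisj (idx a') (idx_lt a') (h.symm ▸ (hcB b).2)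
    · simp at hadj
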